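/- Let C ⊆ ℝ^m be a nonempty closed convex set such that r·𝔹 ⊆ C for some r > 0, where 𝔹 is the closed unit ball. Then for every z ∈ ℝ^m, ⟨z − P_C(z), z⟩ ≥ r·dist(z, C), where P_C(z) is the metric projection of z onto C. -/

import Mathlib

open Metric Set

theorem stmt3 {m : ℕ} (C : Set (EuclideanSpace ℝ (Fin m)))
    (hne : C.Nonempty) (hcl : IsClosed C) (hconv : Convex ℝ C)
    (r : ℝ) (hr : 0 < r) (hball : Metric.closedBall (0 : EuclideanSpace ℝ (Fin m)) r ⊆ C) :
    ∀ z p : EuclideanSpace ℝ (Fin m), p ∈ C → dist z p = infDist z C →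
      r * infDist z C ≤ (inner ℝ (z - p) z : ℝ) := by
  intro z p hp hd
  have hinf : ‖z - p‖ = ⨅ w : C, ‖z - w‖ := by
    have : infDist z C = ⨅ w : C, dist z w := Metric.infDist_eq_iInf
    simpa [dist_eq_norm, this] using hd
  have hobt := (norm_eq_iInf_iff_real_inner_le_zero hconv hp).mp hinf
  rcases eq_or_ne z p with rfl | hne'
  · simp [← hd]
  have hnorm : ‖z - p‖ ≠ 0 := by simpa [sub_eq_zero] using hne'
  have hnpos : 0 < ‖z - p‖ := lt_of_le_of_ne (norm_nonneg _) (Ne.symm hnorm)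
  set c : EuclideanSpace ℝ (Fin m) := (r / ‖z - p‖) • (z - p) with hc
  have hcC : c ∈ C := by
    apply hball
    simp only [Metric.mem_closedBall, dist_zero_right, hc, norm_smul]
    rw [Real.norm_eq_abs, abs_of_pos (div_pos hr hnpos), div_mul_cancel₀ _ hnorm]
  have key := hobt c hcC
  have hic : (inner ℝ (z - p) c : ℝ) = r * ‖z - p‖ := by
    rw [hc, real_inner_smul_right, real_inner_self_eq_norm_sq]
    field_simp
  have h1 : (inner ℝ (z - p) (c - p) : ℝ) = r * ‖z - p‖ - inner ℝ (z - p) p := by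
    rw [inner_sub_right, hic]
  have h2 : r * ‖z - p‖ ≤ (inner ℝ (z - p) p : ℝ) := by linarith [h1 ▸ key]
  have h3 : (inner ℝ (z - p) z : ℝ) = ‖z - p‖ ^ 2 + inner ℝ (z - p) p := by
    have : (inner ℝ (z - p) z : ℝ) = inner ℝ (z - p) (z - p) + inner ℝ (z - p) p := by
      rw [← inner_add_right, sub_add_cancel]
    rw [this, real_inner_self_eq_norm_sq]
  have hd' : infDist z C = ‖z - p‖ := by rw [← hd, dist_eq_norm]
  rw [hd']
  nlinarith [sq_nonneg ‖z - p‖]
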